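/- For n ≥ 7, the simplicial complex NI[P_n^2] on vertices x_1,...,x_n with facets F_1 = {x_1,x_2,x_3}, F_{n-4} = {x_{n-2},x_{n-1},x_n}, and F_i = {x_i, x_{i+1}, x_{i+2}, x_{i+3}, x_{i+4}} for 2 ≤ i ≤ n-5 is (non-pure) shellable; in particular the ordering F_2, F_3, ..., F_{n-5}, F_1, F_{n-4} is a shelling order. -/
import Mathlib


noncomputable section

/-- The face `{x_{a+1}, …, x_{b+1}}` (0-indexed: `{j : Fin n | a ≤ j ≤ b}`). -/
def faceIcc (n a b : ℕ) : Finset (Fin n) :=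
  Finset.univ.filter (fun j : Fin n => a ≤ (j : ℕ) ∧ (j : ℕ) ≤ b)

/-- The facets of the simplicial complex `NI[P_n²]` (for `n ≥ 7`), 1-indexed in the paper:
`F_1 = {x_1,x_2,x_3}`, `F_{n-4} = {x_{n-2},x_{n-1},x_n}`, and
`F_i = {x_i,…,x_{i+4}}` for `2 ≤ i ≤ n-5`. -/
def niFacets (n : ℕ) : Finset (Finset (Fin n)) :=
  insert (faceIcc n 0 2) (insert (faceIcc n (n - 3) (n - 1))
    ((Finset.Icc 1 (n - 6)).image fun a => faceIcc n a (a + 4)))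

/-- The simplicial complex `NI[P_n²]`: all subsets of the facets. -/
def niComplex (n : ℕ) : Finset (Finset (Fin n)) :=
  Finset.univ.filter (fun A : Finset (Fin n) => ∃ F ∈ niFacets n, A ⊆ F)

/-- `G` is a shelling order of a (non-pure) simplicial complex: for all `i < j` there are
a vertex `v ∈ G j \ G i` and an index `l < j` with `G j \ G l = {v}`. -/
def IsShellingOrder {n r : ℕ} (G : Fin r → Finset (Fin n)) : Prop :=
  ∀ i j : Fin r, i < j →
    ∃ v ∈ G j \ G i, ∃ l : Fin r, l < j ∧ G j \ G l = {v}

/-- The ordering `F_2, F_3, …, F_{n-5}, F_1, F_{n-4}` of the facets of `NI[P_n²]`. -/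
def shellOrd (n : ℕ) (j : Fin (n - 4)) : Finset (Fin n) :=
  if (j : ℕ) < n - 6 then faceIcc n ((j : ℕ) + 1) ((j : ℕ) + 5)
  else if (j : ℕ) = n - 6 then faceIcc n 0 2
  else faceIcc n (n - 3) (n - 1)

lemma mem_faceIcc {n a b : ℕ} {x : Fin n} :
    x ∈ faceIcc n a b ↔ a ≤ (x : ℕ) ∧ (x : ℕ) ≤ b := by
  simp [faceIcc]

lemma faceIcc_congr {n a b a' b' : ℕ} (h1 : a = a') (h2 : b = b') :
    faceIcc n a b = faceIcc n a' b' := by rw [h1, h2]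

lemma faceIcc_inj {n a b c d : ℕ} (hb : b < n) (hd : d < n) (hab : a ≤ b) (hcd : c ≤ d)
    (h : faceIcc n a b = faceIcc n c d) : a = c ∧ b = d := by
  have h1 : c ≤ a ∧ a ≤ d := mem_faceIcc.mp
    (show (⟨a, by omega⟩ : Fin n) ∈ faceIcc n c d by
      rw [← h]; exact mem_faceIcc.mpr ⟨le_rfl, hab⟩)
  have h2 : c ≤ b ∧ b ≤ d := mem_faceIcc.mp
    (show (⟨b, hb⟩ : Fin n) ∈ faceIcc n c d by
      rw [← h]; exact mem_faceIcc.mpr ⟨hab, le_rfl⟩)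
  have h3 : a ≤ c ∧ c ≤ b := mem_faceIcc.mp
    (show (⟨c, by omega⟩ : Fin n) ∈ faceIcc n a b by
      rw [h]; exact mem_faceIcc.mpr ⟨le_rfl, hcd⟩)
  have h4 : a ≤ d ∧ d ≤ b := mem_faceIcc.mp
    (show (⟨d, hd⟩ : Fin n) ∈ faceIcc n a b by
      rw [h]; exact mem_faceIcc.mpr ⟨hcd, le_rfl⟩)
  omega

lemma shellOrd_spec (n : ℕ) (hn : 7 ≤ n) (j : Fin (n - 4)) :
    ∃ a b, a ≤ b ∧ b < n ∧ shellOrd n j = faceIcc n a b ∧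
      (((j : ℕ) < n - 6 ∧ a = (j : ℕ) + 1 ∧ b = (j : ℕ) + 5) ∨
       ((j : ℕ) = n - 6 ∧ a = 0 ∧ b = 2) ∨
       ((j : ℕ) = n - 5 ∧ a = n - 3 ∧ b = n - 1)) := by
  have hj := j.isLt
  unfold shellOrd
  split_ifs with h1 h2
  · exact ⟨(j : ℕ) + 1, (j : ℕ) + 5, by omega, by omega, rfl, Or.inl ⟨h1, rfl, rfl⟩⟩
  · exact ⟨0, 2, by omega, by omega, rfl, Or.inr (Or.inl ⟨h2, rfl, rfl⟩)⟩
  · exact ⟨n - 3, n - 1, by omega, by omega, rfl, Or.inr (Or.inr ⟨by omega, rfl, rfl⟩)⟩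

/-- For `n ≥ 7`, the simplicial complex `NI[P_n²]` is (non-pure) shellable; in fact the
ordering `F_2, F_3, …, F_{n-5}, F_1, F_{n-4}` of its facets is a shelling order. -/
theorem niComplex_shellable (n : ℕ) (hn : 7 ≤ n) :
    Function.Injective (shellOrd n) ∧
    Finset.image (shellOrd n) Finset.univ = niFacets n ∧
    IsShellingOrder (shellOrd n) := by
  refine ⟨?_, ?_, ?_⟩
  · -- injectivity
    intro i j h
    obtain ⟨a, b, hab, hb, hie, hci⟩ := shellOrd_spec n hn i
    obtain ⟨c, d, hcd, hd, hje, hcj⟩ := shellOrd_spec n hn j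
    rw [hie, hje] at h
    obtain ⟨hac, hbd⟩ := faceIcc_inj hb hd hab hcd h
    exact Fin.ext (by omega)
  · -- image
    ext S
    simp only [Finset.mem_image, Finset.mem_univ, true_and, niFacets, Finset.mem_insert,
      Finset.mem_Icc]
    constructor
    · rintro ⟨j, rfl⟩
      obtain ⟨a, b, hab, hb, hje, hcj⟩ := shellOrd_spec n hn j
      rw [hje]
      rcases hcj with ⟨h1, ha, hbb⟩ | ⟨h1, ha, hbb⟩ | ⟨h1, ha, hbb⟩
      · exact Or.inr (Or.inr ⟨a, ⟨by omega, by omega⟩,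
          faceIcc_congr rfl (by omega)⟩)
      · exact Or.inl (faceIcc_congr ha hbb)
      · exact Or.inr (Or.inl (faceIcc_congr ha hbb))
    · rintro (rfl | rfl | ⟨a, ha, rfl⟩)
      · refine ⟨⟨n - 6, by omega⟩, ?_⟩
        set j : Fin (n - 4) := ⟨n - 6, by omega⟩ with hjdef
        obtain ⟨c, d, hcd, hd, hje, hcj⟩ := shellOrd_spec n hn j
        have hv : (j : ℕ) = n - 6 := rfl
        rw [hje]
        rcases hcj with ⟨h1, _, _⟩ | ⟨_, hc, hdd⟩ | ⟨h1, _, _⟩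
        · exfalso; omega
        · exact faceIcc_congr hc hdd
        · exfalso; omega
      · refine ⟨⟨n - 5, by omega⟩, ?_⟩
        set j : Fin (n - 4) := ⟨n - 5, by omega⟩ with hjdef
        obtain ⟨c, d, hcd, hd, hje, hcj⟩ := shellOrd_spec n hn j
        have hv : (j : ℕ) = n - 5 := rfl
        rw [hje]
        rcases hcj with ⟨h1, _, _⟩ | ⟨h1, _, _⟩ | ⟨_, hc, hdd⟩
        · exfalso; omega
        · exfalso; omega
        · exact faceIcc_congr hc hdd
      · refine ⟨⟨a - 1, by omega⟩, ?_⟩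
        set j : Fin (n - 4) := ⟨a - 1, by omega⟩ with hjdef
        obtain ⟨c, d, hcd, hd, hje, hcj⟩ := shellOrd_spec n hn j
        have hv : (j : ℕ) = a - 1 := rfl
        obtain ⟨ha1, ha2⟩ := ha
        rw [hje]
        rcases hcj with ⟨h1, hc, hdd⟩ | ⟨h1, _, _⟩ | ⟨h1, _, _⟩
        · exact faceIcc_congr (by omega) (by omega)
        · exfalso; omega
        · exfalso; omega
  · -- shelling order
    intro i j hij
    have hijv : (i : ℕ) < (j : ℕ) := hij
    have hi := i.isLt
    have hj := j.isLt
    obtain ⟨a, b, hab, hb, hie, hci⟩ := shellOrd_spec n hn i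
    obtain ⟨c, d, hcd, hd, hje, hcj⟩ := shellOrd_spec n hn j
    rcases hcj with ⟨h1, hc, hdd⟩ | ⟨h1, hc, hdd⟩ | ⟨h1, hc, hdd⟩
    · -- j < n - 6 : G j = [j+1, j+5], take v = j+5, l = j-1
      have hci' : (i : ℕ) < n - 6 ∧ a = (i : ℕ) + 1 ∧ b = (i : ℕ) + 5 := by
        rcases hci with h | h | h
        · exact h
        · exfalso; omega
        · exfalso; omega
      set v : Fin n := ⟨(j : ℕ) + 5, by omega⟩ with hvdef
      have hvv : (v : ℕ) = (j : ℕ) + 5 := rfl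
      refine ⟨v, ?_, ⟨(j : ℕ) - 1, by omega⟩, ?_, ?_⟩
      · rw [hie, hje, Finset.mem_sdiff, mem_faceIcc, mem_faceIcc]
        omega
      · show ((j : ℕ) - 1) < (j : ℕ)
        omega
      · set l : Fin (n - 4) := ⟨(j : ℕ) - 1, by omega⟩ with hldef
        obtain ⟨e, f, hef, hf, hle, hcl⟩ := shellOrd_spec n hn l
        have hlv : (l : ℕ) = (j : ℕ) - 1 := rfl
        have hcl' : e = (j : ℕ) ∧ f = (j : ℕ) + 4 := by
          rcases hcl with h | h | h
          · constructor <;> omega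
          · exfalso; omega
          · exfalso; omega
        rw [hje, hle]
        ext x
        have hx := x.isLt
        simp only [Finset.mem_sdiff, mem_faceIcc, Finset.mem_singleton, Fin.ext_iff]
        omega
    · -- j = n - 6 : G j = [0,2], take v = 0, l = 0
      have hci' : (i : ℕ) < n - 6 ∧ a = (i : ℕ) + 1 ∧ b = (i : ℕ) + 5 := by
        rcases hci with h | h | h
        · exact h
        · exfalso; omega
        · exfalso; omega
      set v : Fin n := ⟨0, by omega⟩ with hvdef
      have hvv : (v : ℕ) = 0 := rfl
      refine ⟨v, ?_, ⟨0, by omega⟩, ?_, ?_⟩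
      · rw [hie, hje, Finset.mem_sdiff, mem_faceIcc, mem_faceIcc]
        omega
      · show (0 : ℕ) < (j : ℕ)
        omega
      · set l : Fin (n - 4) := ⟨0, by omega⟩ with hldef
        obtain ⟨e, f, hef, hf, hle, hcl⟩ := shellOrd_spec n hn l
        have hlv : (l : ℕ) = 0 := rfl
        have hcl' : e = 1 ∧ f = 5 := by
          rcases hcl with h | h | h
          · constructor <;> omega
          · exfalso; omega
          · exfalso; omega
        rw [hje, hle]
        ext x
        have hx := x.isLt
        simp only [Finset.mem_sdiff, mem_faceIcc, Finset.mem_singleton, Fin.ext_iff]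
        omega
    · -- j = n - 5 : G j = [n-3, n-1], take v = n-1, l = n-7
      set v : Fin n := ⟨n - 1, by omega⟩ with hvdef
      have hvv : (v : ℕ) = n - 1 := rfl
      refine ⟨v, ?_, ⟨n - 7, by omega⟩, ?_, ?_⟩
      · rw [hie, hje, Finset.mem_sdiff, mem_faceIcc, mem_faceIcc]
        rcases hci with h | h | h <;> omega
      · show (n - 7 : ℕ) < (j : ℕ)
        omega
      · set l : Fin (n - 4) := ⟨n - 7, by omega⟩ with hldef
        obtain ⟨e, f, hef, hf, hle, hcl⟩ := shellOrd_spec n hn l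
        have hlv : (l : ℕ) = n - 7 := rfl
        have hcl' : e = n - 6 ∧ f = n - 2 := by
          rcases hcl with h | h | h
          · constructor <;> omega
          · exfalso; omega
          · exfalso; omega
        rw [hje, hle]
        ext x
        have hx := x.isLt
        simp only [Finset.mem_sdiff, mem_faceIcc, Finset.mem_singleton, Fin.ext_iff]
        omega


end
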